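/- arXiv:1812.08647 — 3 statements merged into one kernel-verified Lean document; each statement's English description precedes it below -/
import Mathlib

section
/- Let 0 ≠ g ∈ L²(ℝ) be supported in a half-line (−∞, a] or [a, ∞). Then for any finite set Λ = {(a_k,b_k)}_{k=1}^N of distinct points in ℝ², the set {M_{b_k}T_{a_k}g}_{k=1}^N is linearly independent in L²(ℝ). -/
open MeasureTheory Real Complex


noncomputable def expChar (b : ℝ) : Multiplicative ℝ →* ℂ where
  toFun x := Complex.exp (2 * π * Complex.I * b * (Multiplicative.toAdd x : ℝ))
  map_one' := by simp
  map_mul' x y := by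
    show Complex.exp (2 * π * Complex.I * b * ((Multiplicative.toAdd (x * y) : ℝ) : ℂ)) = _
    rw [← Complex.exp_add]
    congr 1
    rw [toAdd_mul]
    push_cast
    ring

lemma expChar_apply (b : ℝ) (x : Multiplicative ℝ) :
    expChar b x = Complex.exp (2 * π * Complex.I * b * (Multiplicative.toAdd x : ℝ)) := rfl

lemma expChar_injective : Function.Injective expChar := by
  intro b b' hbb
  by_contra hne
  have hsub : b - b' ≠ 0 := sub_ne_zero.mpr hne
  set t : ℝ := 1 / (2 * (b - b')) with ht
  have h1 : expChar b (Multiplicative.ofAdd t) = expChar b' (Multiplicative.ofAdd t) := by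
    rw [hbb]
  simp only [expChar, MonoidHom.coe_mk, OneHom.coe_mk, toAdd_ofAdd] at h1
  rw [Complex.exp_eq_exp_iff_exists_int] at h1
  obtain ⟨n, hn⟩ := h1
  have h2 : (b : ℂ) * t = b' * t + n := by
    have h2πI : (2 * (π : ℂ) * Complex.I : ℂ) ≠ 0 := by
      simp [Real.pi_ne_zero, Complex.I_ne_zero]
    apply mul_left_cancel₀ h2πI
    linear_combination hn
  have h3 : b * t = b' * t + n := by exact_mod_cast h2
  have h4 : (b - b') * t = n := by linarith
  rw [ht] at h4
  field_simp at h4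
  have h5 : (2 * (n : ℝ) - 1) * (b - b') = 0 := by linear_combination (-(b - b')) * h4
  rcases mul_eq_zero.mp h5 with h6 | h6
  · have : (2 * n : ℤ) = 1 := by exact_mod_cast (by linarith : (2 * (n:ℝ)) = 1)
    omega
  · exact hsub h6

lemma expsum_eq_zero {ι : Type} [Fintype ι] (b : ι → ℝ) (hb : Function.Injective b) (c : ι → ℂ)
    (h : ∀ x : ℝ, ∑ j, c j * Complex.exp (2 * π * Complex.I * b j * x) = 0) :
    ∀ j, c j = 0 := by
  have li : LinearIndependent ℂ (fun j : ι => ((expChar (b j) : Multiplicative ℝ → ℂ))) :=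
    (linearIndependent_monoidHom (Multiplicative ℝ) ℂ).comp
      (fun j => expChar (b j)) (expChar_injective.comp hb)
  refine Fintype.linearIndependent_iff.mp li c ?_
  funext x
  simp only [Finset.sum_apply, Pi.smul_apply, smul_eq_mul, Pi.zero_apply, expChar_apply]
  exact h (Multiplicative.toAdd x)

lemma expsum_of_measure {ι : Type} [Fintype ι] (b : ι → ℝ) (hb : Function.Injective b) (c : ι → ℂ)
    (hZ : volume {x : ℝ | ∑ j, c j * Complex.exp (2 * π * Complex.I * b j * x) = 0} ≠ 0) :
    ∀ j, c j = 0 := by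
  set F : ℝ → ℂ := fun x => ∑ j, c j * Complex.exp (2 * π * Complex.I * b j * x) with hF
  set Z : Set ℝ := {x | F x = 0} with hZdef
  have hacc : ∃ z ∈ Z, ∃ᶠ x in nhdsWithin z {z}ᶜ, x ∈ Z := by
    by_contra hc
    push_neg at hc
    have hdisc : DiscreteTopology Z := by
      rw [discreteTopology_subtype_iff]
      intro x hx
      have h1 : ∀ᶠ y in nhdsWithin x {x}ᶜ, y ∉ Z := hc x hx
      exact Filter.inf_principal_eq_bot.mpr h1
    have hcnt : Z.Countable := by
      have : Countable Z := TopologicalSpace.separableSpace_iff_countable.mp inferInstance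
      exact Set.countable_coe_iff.mp this
    exact hZ (hcnt.measure_zero _)
  have hFa : AnalyticOnNhd ℝ F Set.univ := by
    intro x _
    apply Finset.analyticAt_fun_sum
    intro j _
    exact analyticAt_const.mul
      ((analyticAt_cexp.restrictScalars).comp
        (analyticAt_const.mul (Complex.ofRealCLM.analyticAt x)))
  obtain ⟨z, hz, hfreq⟩ := hacc
  have heq : Set.EqOn F 0 Set.univ :=
    hFa.eqOn_zero_of_preconnected_of_frequently_eq_zero isPreconnected_univ (Set.mem_univ z)
      (hfreq.mono fun w hw => hw)
  exact expsum_eq_zero b hb c (fun x => heq (Set.mem_univ x))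


lemma edge_exists (g : ℝ → ℂ) (hg0 : ¬ g =ᵐ[volume] 0) (a : ℝ)
    (ha : ∀ᵐ x : ℝ ∂volume, a < x → g x = 0) :
    ∃ s : ℝ, (∀ᵐ x : ℝ ∂volume, s < x → g x = 0) ∧
      ∀ ε : ℝ, 0 < ε → ¬ (∀ᵐ x : ℝ ∂volume, s - ε < x → g x = 0) := by
  set S : Set ℝ := {t | ∀ᵐ x : ℝ ∂volume, t < x → g x = 0} with hS
  have hup : ∀ {t t' : ℝ}, t ∈ S → t ≤ t' → t' ∈ S := by
    intro t t' ht htt'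
    simp only [hS, Set.mem_setOf_eq] at ht ⊢
    filter_upwards [ht] with x hx h'
    exact hx (lt_of_le_of_lt htt' h')
  have hSne : S.Nonempty := ⟨a, ha⟩
  have hbdd : BddBelow S := by
    by_contra hb
    apply hg0
    have h1 : ∀ n : ℕ, (-(n : ℝ)) ∈ S := by
      intro n
      obtain ⟨t, htS, htn⟩ := not_bddBelow_iff.mp hb (-(n : ℝ))
      exact hup htS htn.le
    have h2 : ∀ᵐ x : ℝ ∂volume, ∀ n : ℕ, (-(n : ℝ)) < x → g x = 0 := ae_all_iff.mpr h1
    filter_upwards [h2] with x hx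
    obtain ⟨n, hn⟩ := exists_nat_gt (-x)
    exact hx n (by linarith)
  set s := sInf S with hs
  have hsmem : s ∈ S := by
    have h1 : ∀ n : ℕ, s + 1 / (n + 1) ∈ S := by
      intro n
      obtain ⟨t, htS, htlt⟩ := (csInf_lt_iff hbdd hSne).mp
        (lt_add_of_pos_right s (by positivity : (0:ℝ) < 1 / (n + 1)))
      exact hup htS htlt.le
    have h2 := ae_all_iff.mpr h1
    simp only [hS, Set.mem_setOf_eq]
    filter_upwards [h2] with x hx hlt
    obtain ⟨n, hn⟩ := exists_nat_one_div_lt (show (0:ℝ) < x - s by linarith)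
    exact hx n (by linarith)
  refine ⟨s, hsmem, ?_⟩
  intro ε hε hcon
  have h1 : s - ε ∈ S := hcon
  have h2 := csInf_le hbdd h1
  rw [← hs] at h2
  linarith

lemma hrt_left (g : ℝ → ℂ) (hg0 : ¬ g =ᵐ[volume] 0) (a : ℝ)
    (ha : ∀ᵐ x : ℝ ∂volume, a < x → g x = 0) :
    ∀ N : ℕ, ∀ Λ : Fin N → ℝ × ℝ, Function.Injective Λ → ∀ c : Fin N → ℂ,
      ((fun x : ℝ => ∑ k : Fin N,
          c k * Complex.exp (2 * π * Complex.I * (Λ k).2 * x) * g (x - (Λ k).1))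
        =ᵐ[volume] 0) →
      ∀ k, c k = 0 := by
  obtain ⟨s, hs1, hs2⟩ := edge_exists g hg0 a ha
  have hpos : ∀ ε : ℝ, 0 < ε → volume {x : ℝ | s - ε < x ∧ x ≤ s ∧ g x ≠ 0} ≠ 0 := by
    intro ε hε h0
    apply hs2 ε hε
    rw [ae_iff]
    have hsub : {x : ℝ | ¬(s - ε < x → g x = 0)} ⊆
        {x : ℝ | s - ε < x ∧ x ≤ s ∧ g x ≠ 0} ∪ {x : ℝ | ¬(s < x → g x = 0)} := by
      intro x hx
      simp only [Set.mem_setOf_eq, Classical.not_imp] at hx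
      by_cases hxs : x ≤ s
      · exact Or.inl ⟨hx.1, hxs, hx.2⟩
      · exact Or.inr (by
          simp only [Set.mem_setOf_eq, Classical.not_imp]
          exact ⟨lt_of_not_ge hxs, hx.2⟩)
    refine measure_mono_null hsub (measure_union_null h0 ?_)
    rw [← ae_iff] ; exact hs1
  intro N
  induction N using Nat.strong_induction_on with
  | _ N IH =>
  intro Λ hΛ c h
  rcases Nat.eq_zero_or_pos N with hN0 | hNpos
  · subst hN0; exact fun k => k.elim0
  have : NeZero N := ⟨hNpos.ne'⟩
  have hne : (Finset.univ : Finset (Fin N)).Nonempty := Finset.univ_nonempty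
  set A : ℝ := Finset.univ.sup' hne (fun k => (Λ k).1) with hA
  set K : Finset (Fin N) := Finset.univ.filter (fun k => (Λ k).1 = A) with hK
  have hKne : K.Nonempty := by
    obtain ⟨k0, hk0m, hk0⟩ := Finset.exists_mem_eq_sup' hne (fun k => (Λ k).1)
    exact ⟨k0, by simp [hK, hk0.symm, hA]⟩
  set T : Finset (Fin N) := Finset.univ.filter (fun k => (Λ k).1 < A) with hT
  set A' : ℝ := if hTne : T.Nonempty then T.sup' hTne (fun k => (Λ k).1) else A - 1 with hA'
  have hA'lt : A' < A := by
    rw [hA']; split_ifs with hTne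
    · obtain ⟨k1, hk1m, hk1⟩ := Finset.exists_mem_eq_sup' hTne (fun k => (Λ k).1)
      rw [hk1]
      exact (Finset.mem_filter.mp hk1m).2
    · linarith
  have hsplit : ∀ k, k ∈ K ∨ (Λ k).1 ≤ A' := by
    intro k
    by_cases hk : (Λ k).1 = A
    · left; simp [hK, hk]
    · right
      have hle : (Λ k).1 ≤ A := Finset.le_sup' (fun k => (Λ k).1) (Finset.mem_univ k)
      have hkT : k ∈ T := by simp [hT, lt_of_le_of_ne hle hk]
      rw [hA']
      split_ifs with hTne
      · exact Finset.le_sup' (fun k => (Λ k).1) hkT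
      · exact absurd ⟨k, hkT⟩ hTne
  -- the edge window for the top layer
  set E : Set ℝ := {x | s + A' < x ∧ x ≤ s + A ∧ g (x - A) ≠ 0} with hE
  have hEpos : volume E ≠ 0 := by
    intro h0
    apply hpos (A - A') (by linarith)
    have heq : {x : ℝ | s - (A - A') < x ∧ x ≤ s ∧ g x ≠ 0} = (fun y : ℝ => y + A) ⁻¹' E := by
      ext y
      simp only [hE, Set.mem_setOf_eq, Set.mem_preimage, add_sub_cancel_right]
      constructor
      · rintro ⟨h1, h2, h3⟩; exact ⟨by linarith, by linarith, h3⟩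
      · rintro ⟨h1, h2, h3⟩; exact ⟨by linarith, by linarith, h3⟩
    rw [heq, measure_preimage_add_right]
    exact h0
  -- a.e., lower-layer translates vanish beyond their edges
  have hnull : ∀ k : Fin N, ∀ᵐ x : ℝ ∂volume, s + (Λ k).1 < x → g (x - (Λ k).1) = 0 := by
    intro k
    rw [ae_iff] at hs1 ⊢
    have heq : {x : ℝ | ¬(s + (Λ k).1 < x → g (x - (Λ k).1) = 0)}
        = (fun x : ℝ => x + -(Λ k).1) ⁻¹' {y : ℝ | ¬(s < y → g y = 0)} := by
      ext x
      simp only [Set.mem_setOf_eq, Set.mem_preimage, Classical.not_imp]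
      constructor
      · rintro ⟨h1, h2⟩
        refine ⟨by linarith, ?_⟩
        rwa [← sub_eq_add_neg]
      · rintro ⟨h1, h2⟩
        refine ⟨by linarith, ?_⟩
        rwa [sub_eq_add_neg]
    rw [heq, measure_preimage_add_right]
    exact hs1
  have hae : ∀ᵐ x : ℝ ∂volume,
      ((∑ k : Fin N, c k * Complex.exp (2 * π * Complex.I * (Λ k).2 * x) * g (x - (Λ k).1)) = 0
        ∧ ∀ k : Fin N, s + (Λ k).1 < x → g (x - (Λ k).1) = 0) := by
    have h2 : ∀ᵐ x : ℝ ∂volume, ∀ k : Fin N, s + (Λ k).1 < x → g (x - (Λ k).1) = 0 :=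
      ae_all_iff.mpr hnull
    filter_upwards [h, h2] with x hx1 hx2
    exact ⟨hx1, hx2⟩
  -- the top-layer trig polynomial vanishes on a positive measure set
  have hZ : volume {x : ℝ |
      ∑ j : {k // k ∈ K}, c j.1 * Complex.exp (2 * π * Complex.I * (Λ j.1).2 * x) = 0} ≠ 0 := by
    intro h0
    set G : Set ℝ := {x : ℝ |
      ((∑ k : Fin N, c k * Complex.exp (2 * π * Complex.I * (Λ k).2 * x) * g (x - (Λ k).1)) = 0
        ∧ ∀ k : Fin N, s + (Λ k).1 < x → g (x - (Λ k).1) = 0)} with hG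
    have hGc : volume Gᶜ = 0 := by
      rw [measure_eq_zero_iff_ae_notMem]
      filter_upwards [hae] with x hx
      simp only [Set.mem_compl_iff, not_not, hG, Set.mem_setOf_eq]
      exact hx
    have hEG : E ∩ G ⊆ {x : ℝ |
        ∑ j : {k // k ∈ K}, c j.1 * Complex.exp (2 * π * Complex.I * (Λ j.1).2 * x) = 0} := by
      rintro x ⟨hxE, hxG⟩
      simp only [hE, Set.mem_setOf_eq] at hxE
      obtain ⟨hx1, hx2, hx3⟩ := hxE
      simp only [hG, Set.mem_setOf_eq] at hxG
      obtain ⟨hsum, hvan⟩ := hxG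
      have hKsum : ∑ k ∈ K, c k * Complex.exp (2 * π * Complex.I * (Λ k).2 * x) * g (x - A)
          = 0 := by
        rw [← hsum]
        symm
        rw [← Finset.sum_subset (Finset.subset_univ K)]
        · apply Finset.sum_congr rfl
          intro k hk
          have : (Λ k).1 = A := (Finset.mem_filter.mp hk).2
          rw [this]
        · intro k _ hk
          have hkA' : (Λ k).1 ≤ A' := (hsplit k).resolve_left hk
          have : g (x - (Λ k).1) = 0 := hvan k (by linarith)
          rw [this, mul_zero]
      rw [← Finset.sum_mul] at hKsum
      rcases mul_eq_zero.mp hKsum with h1 | h1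
      · rw [Set.mem_setOf_eq, Finset.sum_coe_sort K
          (fun k => c k * Complex.exp (2 * π * Complex.I * (Λ k).2 * x))]
        exact h1
      · exact absurd h1 hx3
    apply hEpos
    have h1 : volume (E ∩ G) = 0 := measure_mono_null hEG h0
    have h2 : volume E ≤ volume (E ∩ G) + volume (E ∩ Gᶜ) := by
      refine (measure_mono ?_).trans (measure_union_le _ _)
      intro x hx
      by_cases hxG : x ∈ G
      · exact Or.inl ⟨hx, hxG⟩
      · exact Or.inr ⟨hx, hxG⟩
    have h3 : volume (E ∩ Gᶜ) = 0 := measure_mono_null Set.inter_subset_right hGc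
    rw [h1, h3, add_zero] at h2
    exact le_antisymm h2 zero_le
  -- conclude top-layer coefficients vanish
  have hbK : Function.Injective (fun j : {k // k ∈ K} => (Λ j.1).2) := by
    rintro ⟨k, hk⟩ ⟨l, hl⟩ hkl
    simp only at hkl
    have hk1 : (Λ k).1 = A := (Finset.mem_filter.mp hk).2
    have hl1 : (Λ l).1 = A := (Finset.mem_filter.mp hl).2
    have : Λ k = Λ l := Prod.ext (by rw [hk1, hl1]) hkl
    exact Subtype.ext (hΛ this)
  have hcK : ∀ k ∈ K, c k = 0 := by
    intro k hk
    exact expsum_of_measure (fun j : {k // k ∈ K} => (Λ j.1).2) hbK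
      (fun j => c j.1) hZ ⟨k, hk⟩
  -- peel off the top layer and use the inductive hypothesis
  intro k
  rcases hsplit k with hkK | hkA'
  · exact hcK k hkK
  · set L : Finset (Fin N) := Finset.univ \ K with hL
    have hkL : k ∈ L := by
      simp only [hL, Finset.mem_sdiff, Finset.mem_univ, true_and]
      intro hkK
      have : (Λ k).1 = A := (Finset.mem_filter.mp hkK).2
      linarith
    set M : ℕ := L.card with hM
    have hMlt : M < N := by
      have h1 : L.card < (Finset.univ : Finset (Fin N)).card := by
        apply Finset.card_lt_card
        rw [Finset.ssubset_def]
        refine ⟨Finset.sdiff_subset, ?_⟩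
        intro hsub
        obtain ⟨k0, hk0⟩ := hKne
        have := hsub (Finset.mem_univ k0)
        simp only [hL, Finset.mem_sdiff] at this
        exact this.2 hk0
      simpa using h1
    set φ : Fin M → Fin N := fun j => (L.equivFin.symm j).1 with hφ
    have hφinj : Function.Injective φ := by
      intro i j hij
      exact L.equivFin.symm.injective (Subtype.ext hij)
    have hpt : ∀ x : ℝ,
        ∑ j : Fin M, c (φ j) * Complex.exp (2 * π * Complex.I * (Λ (φ j)).2 * x)
            * g (x - (Λ (φ j)).1)
        = ∑ k : Fin N, c k * Complex.exp (2 * π * Complex.I * (Λ k).2 * x) * g (x - (Λ k).1) := by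
      intro x
      set F : Fin N → ℂ :=
        fun k => c k * Complex.exp (2 * π * Complex.I * (Λ k).2 * x) * g (x - (Λ k).1) with hF
      have e1 : ∑ j : Fin M, F (φ j) = ∑ i : {x // x ∈ L}, F i.1 :=
        Equiv.sum_comp L.equivFin.symm (fun i : {x // x ∈ L} => F i.1)
      have e2 : ∑ i : {x // x ∈ L}, F i.1 = ∑ k ∈ L, F k := Finset.sum_coe_sort L F
      have e3 : ∑ k ∈ L, F k = ∑ k : Fin N, F k := by
        rw [← Finset.sum_subset (Finset.sdiff_subset : L ⊆ Finset.univ)]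
        intro k _ hkL'
        have hkK : k ∈ K := by
          by_contra hc
          exact hkL' (by simp [hL, hc])
        rw [hF]
        simp [hcK k hkK]
      rw [e1, e2, e3]
    have h' : (fun x : ℝ => ∑ j : Fin M,
        c (φ j) * Complex.exp (2 * π * Complex.I * (Λ (φ j)).2 * x) * g (x - (Λ (φ j)).1))
        =ᵐ[volume] 0 := by
      filter_upwards [h] with x hx
      simpa [hpt x] using hx
    have := IH M hMlt (Λ ∘ φ) (hΛ.comp hφinj) (c ∘ φ) h' (L.equivFin ⟨k, hkL⟩)
    simpa [hφ, Function.comp] using this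

/-- HRT for one-sided supported windows: if `0 ≠ g ∈ L²(ℝ)` is supported in a half-line
`(−∞, a]` or `[a, ∞)`, then for any finite set of distinct points `(a_k, b_k)` the
time-frequency shifts `M_{b_k}T_{a_k}g` are linearly independent. -/
theorem hrt_half_line_support
    (g : ℝ → ℂ) (hg : MemLp g 2 (volume : Measure ℝ)) (hg0 : ¬ g =ᵐ[volume] 0)
    (hsupp : ∃ a : ℝ, (∀ᵐ x : ℝ ∂volume, a < x → g x = 0) ∨
      (∀ᵐ x : ℝ ∂volume, x < a → g x = 0))
    (N : ℕ) (Λ : Fin N → ℝ × ℝ) (hΛ : Function.Injective Λ)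
    (c : Fin N → ℂ)
    (h : (fun x : ℝ => ∑ k : Fin N,
        c k * Complex.exp (2 * π * Complex.I * (Λ k).2 * x) * g (x - (Λ k).1))
      =ᵐ[volume] 0) :
    ∀ k : Fin N, c k = 0 := by
  obtain ⟨a, ha | ha⟩ := hsupp
  · exact hrt_left g hg0 a ha N Λ hΛ c h
  · -- reflect
    set g' : ℝ → ℂ := fun x => g (-x) with hg'
    have hg0' : ¬ g' =ᵐ[volume] 0 := by
      intro hc
      apply hg0
      rw [Filter.eventuallyEq_iff_exists_mem] at hc ⊢
      obtain ⟨S, hS, hSeq⟩ := hc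
      refine ⟨Neg.neg ⁻¹' S, ?_, ?_⟩
      · rw [mem_ae_iff] at hS ⊢
        rw [← Set.preimage_compl]
        rw [Measure.measure_preimage_neg]
        exact hS
      · intro x hx
        have := hSeq hx
        simpa [hg'] using this
    have ha' : ∀ᵐ x : ℝ ∂volume, -a < x → g' x = 0 := by
      rw [ae_iff] at ha ⊢
      have heq : {x : ℝ | ¬(-a < x → g' x = 0)} = Neg.neg ⁻¹' {y : ℝ | ¬(y < a → g y = 0)} := by
        ext x
        simp only [Set.mem_setOf_eq, Set.mem_preimage, Classical.not_imp, hg']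
        constructor
        · rintro ⟨h1, h2⟩; exact ⟨by linarith, h2⟩
        · rintro ⟨h1, h2⟩; exact ⟨by linarith, h2⟩
      rw [heq, Measure.measure_preimage_neg]
      exact ha
    set Λ' : Fin N → ℝ × ℝ := fun k => (-(Λ k).1, -(Λ k).2) with hΛ'
    have hΛ'inj : Function.Injective Λ' := by
      intro i j hij
      apply hΛ
      have h1 := congrArg Prod.fst hij
      have h2 := congrArg Prod.snd hij
      simp only [hΛ'] at h1 h2
      exact Prod.ext (by linarith) (by linarith)
    have hpt : ∀ x : ℝ,
        ∑ k : Fin N, c k * Complex.exp (2 * π * Complex.I * (Λ' k).2 * x) * g' (x - (Λ' k).1)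
        = ∑ k : Fin N, c k * Complex.exp (2 * π * Complex.I * (Λ k).2 * ((-x : ℝ) : ℂ))
            * g (-x - (Λ k).1) := by
      intro x
      apply Finset.sum_congr rfl
      intro k _
      congr 1
      · congr 1
        push_cast [hΛ']
        ring_nf
      · simp only [hg', hΛ']
        congr 1
        ring
    have h0 : ∀ᵐ y : ℝ ∂volume,
        (∑ k : Fin N, c k * Complex.exp (2 * π * Complex.I * (Λ k).2 * y) * g (y - (Λ k).1))
          = 0 := by
      filter_upwards [h] with y hy using hy
    have hgoal : ∀ᵐ x : ℝ ∂volume,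
        (∑ k : Fin N, c k * Complex.exp (2 * π * Complex.I * (Λ' k).2 * x) * g' (x - (Λ' k).1))
          = 0 := by
      rw [ae_iff] at h0 ⊢
      have heq : {x : ℝ | ¬ (∑ k : Fin N,
            c k * Complex.exp (2 * π * Complex.I * (Λ' k).2 * x) * g' (x - (Λ' k).1)) = 0}
          = Neg.neg ⁻¹' {y : ℝ | ¬ (∑ k : Fin N,
            c k * Complex.exp (2 * π * Complex.I * (Λ k).2 * y) * g (y - (Λ k).1)) = 0} := by
        ext x
        simp only [Set.mem_setOf_eq, Set.mem_preimage]
        rw [hpt x]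
      rw [heq, Measure.measure_preimage_neg]
      exact h0
    have h' : (fun x : ℝ => ∑ k : Fin N,
        c k * Complex.exp (2 * π * Complex.I * (Λ' k).2 * x) * g' (x - (Λ' k).1))
        =ᵐ[volume] 0 := by
      filter_upwards [hgoal] with x hx using hx
    exact hrt_left g' hg0' (-a) ha' N Λ' hΛ'inj c h'
end

section
/- Let g(x) = p(x)e^{−πx²} where p is a nonzero polynomial. Then for any finite set of distinct points (a_k,b_k) ∈ ℝ², k = 1,…,N, the functions e^{2πib_kx} g(x−a_k) are linearly independent in L²(ℝ). -/
open MeasureTheory Real Complex Polynomial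

/-- Differentiating an exponential-polynomial identity on `ℝ`. -/
lemma hrt_deriv_step {ι : Type*} (s : Finset ι) (μ : ι → ℂ) (q : ι → ℂ[X])
    (h : ∀ x : ℝ, ∑ k ∈ s, ((q k).eval (x:ℂ)) * Complex.exp (μ k * x) = 0) :
    ∀ x : ℝ, ∑ k ∈ s,
      ((derivative (q k) + μ k • q k).eval (x:ℂ)) * Complex.exp (μ k * x) = 0 := by
  intro x
  have hterm : ∀ k : ι, HasDerivAt (fun y : ℝ => (q k).eval (y:ℂ) * Complex.exp (μ k * y))
      ((derivative (q k) + μ k • q k).eval (x:ℂ) * Complex.exp (μ k * x)) x := by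
    intro k
    have he : HasDerivAt (fun z : ℂ => Complex.exp (μ k * z))
        (Complex.exp (μ k * (x:ℂ)) * μ k) (x:ℂ) := by
      simpa using (((hasDerivAt_id (x:ℂ)).const_mul (μ k)).cexp)
    have h1 : HasDerivAt (fun z : ℂ => (q k).eval z * Complex.exp (μ k * z))
        ((derivative (q k)).eval (x:ℂ) * Complex.exp (μ k * x)
          + (q k).eval (x:ℂ) * (Complex.exp (μ k * x) * μ k)) (x:ℂ) :=
      ((q k).hasDerivAt (x:ℂ)).mul he
    have h2 := h1.comp_ofReal
    convert h2 using 1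
    simp [Polynomial.eval_add, Polynomial.eval_smul, smul_eq_mul]
    ring
  have hsum : HasDerivAt (fun y : ℝ => ∑ k ∈ s, (q k).eval (y:ℂ) * Complex.exp (μ k * y))
      (∑ k ∈ s, (derivative (q k) + μ k • q k).eval (x:ℂ) * Complex.exp (μ k * x)) x :=
    HasDerivAt.fun_sum (fun k _ => hterm k)
  have hzero : (fun y : ℝ => ∑ k ∈ s, (q k).eval (y:ℂ) * Complex.exp (μ k * y))
      = fun _ : ℝ => (0:ℂ) := funext h
  rw [hzero] at hsum
  exact ((hasDerivAt_const x (0:ℂ)).unique hsum).symm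

/-- Shifted step: apply the operator `(D - c)` to the identity. -/
lemma hrt_step {ι : Type*} (s : Finset ι) (μ : ι → ℂ) (c : ℂ) (q : ι → ℂ[X])
    (h : ∀ x : ℝ, ∑ k ∈ s, ((q k).eval (x:ℂ)) * Complex.exp (μ k * x) = 0) :
    ∀ x : ℝ, ∑ k ∈ s,
      ((derivative (q k) + (μ k - c) • q k).eval (x:ℂ)) * Complex.exp (μ k * x) = 0 := by
  intro x
  have h1 := hrt_deriv_step s μ q h x
  have h2 := h x
  calc ∑ k ∈ s, ((derivative (q k) + (μ k - c) • q k).eval (x:ℂ)) * Complex.exp (μ k * x)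
      = ∑ k ∈ s, (((derivative (q k) + μ k • q k).eval (x:ℂ)) * Complex.exp (μ k * x)
          - c * (((q k).eval (x:ℂ)) * Complex.exp (μ k * x))) := by
        apply Finset.sum_congr rfl
        intro k _
        simp [Polynomial.eval_add, Polynomial.eval_smul, smul_eq_mul]
        ring
    _ = 0 := by rw [Finset.sum_sub_distrib, h1, ← Finset.mul_sum, h2]; ring

lemma hrt_nonzero_step (c : ℂ) (hc : c ≠ 0) (q : ℂ[X]) (hq : q ≠ 0) :
    derivative q + c • q ≠ 0 := by
  have h1 : (derivative q).degree < (c • q).degree := by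
    rw [Polynomial.smul_eq_C_mul, Polynomial.degree_C_mul hc]
    exact Polynomial.degree_derivative_lt hq
  have h2 := Polynomial.degree_add_eq_right_of_degree_lt h1
  intro hcon
  rw [hcon, Polynomial.smul_eq_C_mul, Polynomial.degree_C_mul hc] at h2
  exact hq (Polynomial.degree_eq_bot.mp h2.symm)

lemma hrt_poly_zero (q : ℂ[X]) (h : ∀ x : ℝ, q.eval (x:ℂ) = 0) : q = 0 := by
  apply Polynomial.eq_zero_of_infinite_isRoot
  apply Set.Infinite.mono (s := Set.range (fun x : ℝ => (x:ℂ)))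
  · rintro z ⟨x, rfl⟩; exact h x
  · exact Set.infinite_range_of_injective Complex.ofReal_injective

/-- Key lemma: exponential polynomials with distinct frequencies are linearly
independent as functions on `ℝ`. -/
lemma hrt_key {ι : Type*} [DecidableEq ι] (μ : ι → ℂ) (s : Finset ι) :
    ∀ (q : ι → ℂ[X]), Set.InjOn μ s →
      (∀ x : ℝ, ∑ k ∈ s, ((q k).eval (x:ℂ)) * Complex.exp (μ k * x) = 0) →
      ∀ k ∈ s, q k = 0 := by
  induction s using Finset.strongInduction with
  | _ s ih =>
    intro q hinj h k hk
    set m := (q k).natDegree + 1 with hm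
    set T : ι → ℂ[X] → ℂ[X] := fun j r => derivative r + (μ j - μ k) • r with hT
    have hiter : ∀ n : ℕ, ∀ x : ℝ,
        ∑ j ∈ s, (((T j)^[n] (q j)).eval (x:ℂ)) * Complex.exp (μ j * x) = 0 := by
      intro n
      induction n with
      | zero => simpa using h
      | succ n ihn =>
        have := hrt_step s μ (μ k) (fun j => (T j)^[n] (q j)) ihn
        intro x
        have h2 := this x
        convert h2 using 2 with j hj
        rw [Function.iterate_succ_apply']
    have hTk : (T k)^[m] (q k) = 0 := by
      have : T k = fun r => derivative r := by
        funext r; simp [hT]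
      rw [this]
      exact Polynomial.iterate_derivative_eq_zero (by omega)
    have herase : ∀ x : ℝ,
        ∑ j ∈ s.erase k, (((T j)^[m] (q j)).eval (x:ℂ)) * Complex.exp (μ j * x) = 0 := by
      intro x
      have := hiter m x
      rw [← Finset.add_sum_erase s _ hk, hTk] at this
      simpa using this
    have hers : s.erase k ⊂ s := Finset.erase_ssubset hk
    have hzer : ∀ j ∈ s.erase k, (T j)^[m] (q j) = 0 :=
      ih _ hers _ (hinj.mono (Finset.coe_subset.mpr hers.subset)) herase
    have hqj : ∀ j ∈ s.erase k, q j = 0 := by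
      intro j hj
      by_contra hne
      have hcne : μ j - μ k ≠ 0 := by
        have hjs := Finset.mem_of_mem_erase hj
        have hjk := Finset.ne_of_mem_erase hj
        exact sub_ne_zero.mpr (fun hmu => hjk (hinj hjs hk hmu))
      have : ∀ n : ℕ, (T j)^[n] (q j) ≠ 0 := by
        intro n
        induction n with
        | zero => simpa using hne
        | succ n ihn =>
          rw [Function.iterate_succ_apply']
          exact hrt_nonzero_step _ hcne _ ihn
      exact this m (hzer j hj)
    apply hrt_poly_zero
    intro x
    have h2 := h x
    rw [← Finset.add_sum_erase s _ hk] at h2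
    rw [Finset.sum_eq_zero (fun j hj => by rw [hqj j hj]; simp)] at h2
    have h3 : (q k).eval (x:ℂ) * Complex.exp (μ k * x) = 0 := by linear_combination h2
    exact (mul_eq_zero.mp h3).resolve_right (Complex.exp_ne_zero _)

/-- The pointwise algebraic identity relating the Gabor-type term to an
exponential polynomial. -/
lemma hrt_term_eq (p : ℂ[X]) (cc : ℂ) (a b x : ℝ) :
    ((cc * Complex.exp (-((π:ℂ) * (a:ℂ)^2))) • (p.comp (X - C (a:ℂ)))).eval (x:ℂ)
      * Complex.exp ((2*(π:ℂ)*Complex.I*(b:ℂ) + 2*(π:ℂ)*(a:ℂ)) * (x:ℂ))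
    = cc * Complex.exp (2*(π:ℂ)*Complex.I*(b:ℂ)*(x:ℂ))
        * (p.eval ((x - a : ℝ):ℂ) * Complex.exp (-((π:ℂ) * ((x - a : ℝ):ℂ)^2)))
        * Complex.exp ((π:ℂ) * (x:ℂ)^2) := by
  have e1 : Complex.exp (-((π:ℂ) * (a:ℂ)^2))
        * Complex.exp ((2*(π:ℂ)*Complex.I*(b:ℂ) + 2*(π:ℂ)*(a:ℂ)) * (x:ℂ))
      = Complex.exp (2*(π:ℂ)*Complex.I*(b:ℂ)*(x:ℂ))
        * Complex.exp (-((π:ℂ) * ((x:ℂ)-(a:ℂ))^2)) * Complex.exp ((π:ℂ) * (x:ℂ)^2) := by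
    rw [← Complex.exp_add, ← Complex.exp_add, ← Complex.exp_add]
    congr 1; ring
  simp only [Polynomial.eval_smul, Polynomial.eval_comp, Polynomial.eval_sub,
    Polynomial.eval_X, Polynomial.eval_C, smul_eq_mul, Complex.ofReal_sub]
  linear_combination (cc * p.eval ((x:ℂ) - (a:ℂ))) * e1

/-- HRT for Hermite-type windows: if `g(x) = p(x)e^{−πx²}` with `p` a nonzero polynomial, then
for any finite set of distinct points `(a_k, b_k)` the functions `e^{2πib_k x} g(x−a_k)` are
linearly independent in `L²(ℝ)`. -/
theorem hrt_hermite_windows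
    (p : Polynomial ℂ) (hp : p ≠ 0) (g : ℝ → ℂ)
    (hgdef : ∀ x : ℝ, g x = p.eval (x : ℂ) * Complex.exp (-(π * x ^ 2)))
    (N : ℕ) (Λ : Fin N → ℝ × ℝ) (hΛ : Function.Injective Λ)
    (c : Fin N → ℂ)
    (h : (fun x : ℝ => ∑ k : Fin N,
        c k * Complex.exp (2 * π * Complex.I * (Λ k).2 * x) * g (x - (Λ k).1))
      =ᵐ[volume] 0) :
    ∀ k : Fin N, c k = 0 := by
  -- the function is continuous, hence it vanishes identically
  have hfeq : (fun x : ℝ => ∑ k : Fin N,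
        c k * Complex.exp (2 * π * Complex.I * (Λ k).2 * x) * g (x - (Λ k).1))
      = fun x : ℝ => ∑ k : Fin N,
        c k * Complex.exp (2 * π * Complex.I * (Λ k).2 * x)
          * (p.eval ((x - (Λ k).1 : ℝ):ℂ)
            * Complex.exp (-((π:ℂ) * ((x - (Λ k).1 : ℝ):ℂ)^2))) := by
    funext x
    exact Finset.sum_congr rfl (fun k _ => by rw [hgdef])
  have hcont : Continuous (fun x : ℝ => ∑ k : Fin N,
      c k * Complex.exp (2 * π * Complex.I * (Λ k).2 * x) * g (x - (Λ k).1)) := by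
    rw [hfeq]
    apply continuous_finset_sum
    intro k _
    have hsub : Continuous fun x : ℝ => ((x - (Λ k).1 : ℝ):ℂ) :=
      Complex.continuous_ofReal.comp (continuous_sub_right _)
    exact ((continuous_const.mul (Complex.continuous_exp.comp (by fun_prop))).mul
      ((p.continuous.comp hsub).mul
        (Complex.continuous_exp.comp (by fun_prop))))
  have hf0 := (Continuous.ae_eq_iff_eq volume hcont continuous_const).mp h
  have hptw : ∀ x : ℝ, ∑ k : Fin N,
      c k * Complex.exp (2 * π * Complex.I * (Λ k).2 * x) * g (x - (Λ k).1) = 0 :=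
    fun x => congrFun hf0 x
  -- set up the exponential polynomial data
  set μ : Fin N → ℂ := fun k =>
    2*(π:ℂ)*Complex.I*((Λ k).2:ℂ) + 2*(π:ℂ)*((Λ k).1:ℂ) with hμ
  set q : Fin N → ℂ[X] := fun k =>
    (c k * Complex.exp (-((π:ℂ) * (((Λ k).1:ℝ):ℂ)^2))) • (p.comp (X - C (((Λ k).1:ℝ):ℂ)))
    with hq
  have hinj : Set.InjOn μ (Finset.univ : Finset (Fin N)) := by
    intro k _ k' _ hmu
    apply hΛ
    rw [hμ] at hmu
    simp only at hmu
    rw [Complex.ext_iff] at hmu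
    simp [Complex.add_re, Complex.add_im, Complex.mul_re, Complex.mul_im] at hmu
    obtain ⟨h1, h2⟩ := hmu
    have hpi := Real.pi_ne_zero
    exact Prod.ext h1 h2
  have hid : ∀ x : ℝ, ∑ k : Fin N, ((q k).eval (x:ℂ)) * Complex.exp (μ k * x) = 0 := by
    intro x
    calc ∑ k : Fin N, ((q k).eval (x:ℂ)) * Complex.exp (μ k * x)
        = (∑ k : Fin N,
            c k * Complex.exp (2 * π * Complex.I * (Λ k).2 * x) * g (x - (Λ k).1))
            * Complex.exp ((π:ℂ) * (x:ℂ)^2) := by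
          rw [Finset.sum_mul]
          apply Finset.sum_congr rfl
          intro k _
          rw [hgdef]
          exact hrt_term_eq p (c k) (Λ k).1 (Λ k).2 x
      _ = 0 := by rw [hptw x, zero_mul]
  intro k
  have hqk : q k = 0 := hrt_key μ Finset.univ q hinj hid k (Finset.mem_univ k)
  rw [hq] at hqk
  simp only at hqk
  have hcompne : p.comp (X - C (((Λ k).1:ℝ):ℂ)) ≠ 0 := by
    intro h0
    apply hp
    have hcc : (p.comp (X - C (((Λ k).1:ℝ):ℂ))).comp (X + C (((Λ k).1:ℝ):ℂ)) = p := by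
      rw [Polynomial.comp_assoc]
      simp
    rw [h0] at hcc
    simpa using hcc.symm
  have := (smul_eq_zero.mp hqk).resolve_right hcompne
  exact (mul_eq_zero.mp this).resolve_right (Complex.exp_ne_zero _)
end

section
/- Let g ∈ L²(ℝ) be real-valued and nonzero, and let (a,b), (a₀,0) ∈ ℝ² with a₀ ≠ 0. If the symmetric five-point set {g, M₁g, M_{−1}g, M_bT_a g, M_{−b}T_a g} is linearly independent in L²(ℝ), then the four-point set {g, M₁g, T_{a₀}g, M_bT_a g} is linearly independent in L²(ℝ). -/
open MeasureTheory Real Complex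

section Aux
open Set ENNReal NNReal

-- auxiliary: periodic nonneg function with finite lintegral is ae zero
theorem aux_periodic (f : ℝ → ℝ≥0∞) (T : ℝ) (hT : 0 < T)
    (hper : ∀ᵐ x : ℝ ∂volume, f (x + T) = f x)
    (hfin : (∫⁻ x : ℝ, f x) < ∞) :
    (∫⁻ x : ℝ, f x) = 0 := by
  set J : ℝ → ℝ≥0∞ := fun c => ∫⁻ x in Ioc c (c + T), f x with hJdef
  have step : ∀ c : ℝ, J (c + T) = J c := by
    intro c
    have h1 : ∫⁻ x in Ioc c (c + T), f (x + T) ∂volume = J c :=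
      lintegral_congr_ae (ae_restrict_of_ae hper)
    have h2 := (measurePreserving_add_right (volume : Measure ℝ) T).setLIntegral_comp_preimage_emb
      (measurableEmbedding_addRight T) f (Ioc (c + T) (c + T + T))
    have hset : (fun x => x + T) ⁻¹' Ioc (c + T) (c + T + T) = Ioc c (c + T) := by
      rw [preimage_add_const_Ioc]
      congr 1 <;> ring
    rw [hset] at h2
    calc J (c + T) = ∫⁻ x in Ioc c (c + T), f (x + T) ∂volume := h2.symm
    _ = J c := h1
  have hJZ : ∀ n : ℤ, J (n • T) = J 0 := by
    intro n
    induction n using Int.induction_on with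
    | zero => simp
    | succ n ih =>
      have e : ((n : ℤ) + 1) • T = (n : ℤ) • T + T := by rw [add_zsmul, one_zsmul]
      rw [e, step]; exact ih
    | pred n ih =>
      have e : (-(n : ℤ) - 1) • T + T = (-(n : ℤ)) • T := by
        rw [sub_zsmul, one_zsmul]; ring
      have := step ((-(n : ℤ) - 1) • T)
      rw [e] at this
      rw [← this]; exact ih
  have hU : ⋃ n : ℤ, Ioc ((n : ℤ) • T) ((n : ℤ) • T + T) = univ := by
    have h := iUnion_Ioc_zsmul hT (α := ℝ)
    simp_rw [add_zsmul, one_zsmul] at h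
    exact h
  have hdisj : Pairwise (Function.onFun Disjoint fun n : ℤ => Ioc ((n : ℤ) • T) ((n : ℤ) • T + T)) := by
    have h := pairwise_disjoint_Ioc_zsmul (b := T) (α := ℝ)
    simp_rw [add_zsmul, one_zsmul] at h
    exact h
  have hsum : (∫⁻ x : ℝ, f x) = ∑' n : ℤ, J ((n : ℤ) • T) := by
    rw [← setLIntegral_univ, ← hU,
      lintegral_iUnion₀ (fun i => measurableSet_Ioc.nullMeasurableSet) hdisj.aedisjoint]
  have hJ0 : J 0 = 0 := by
    by_contra hne
    rw [hsum] at hfin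
    have : (∑' _ : ℤ, J 0) = ∞ := ENNReal.tsum_const_eq_top_of_ne_zero hne
    rw [tsum_congr hJZ, this] at hfin
    exact absurd hfin (by simp)
  rw [hsum, tsum_congr hJZ, hJ0, tsum_zero]

theorem aux_ae_zero (g : ℝ → ℂ) (hg : MemLp g 2 (volume : Measure ℝ))
    (a₀ : ℝ) (ha₀ : a₀ ≠ 0) (lam : ℂ)
    (hrel : ∀ᵐ x : ℝ ∂volume, g (x - a₀) = lam * g x) :
    g =ᵐ[volume] 0 := by
  set f : ℝ → ℝ≥0∞ := fun x => (‖g x‖₊ : ℝ≥0∞) ^ (2 : ℕ) with hfdef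
  have hfmeas : AEMeasurable f (volume : Measure ℝ) :=
    (hg.aestronglyMeasurable.aemeasurable.enorm).pow_const 2
  have hfin : (∫⁻ x : ℝ, f x) < ∞ := by
    have h := (eLpNorm_lt_top_iff_lintegral_rpow_enorm_lt_top
      (two_ne_zero) (by norm_num : (2 : ℝ≥0∞) ≠ ∞)).mp hg.eLpNorm_lt_top
    have h2 : ((2 : ℝ≥0∞).toReal) = ((2 : ℕ) : ℝ) := by norm_num
    simpa [h2, ENNReal.rpow_natCast, hfdef, enorm_eq_nnnorm] using h
  -- prove g =ᵐ 0 by contradiction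
  by_contra hne
  have hL0 : (∫⁻ x : ℝ, f x) ≠ 0 := by
    intro h0
    apply hne
    have := (lintegral_eq_zero_iff' hfmeas).mp h0
    filter_upwards [this] with x hx
    simp only [hfdef, Pi.zero_apply] at hx ⊢
    rw [pow_eq_zero_iff two_ne_zero, ENNReal.coe_eq_zero, nnnorm_eq_zero] at hx
    simpa using hx
  -- scaling relation
  set r : ℝ≥0∞ := ((‖lam‖₊ : ℝ≥0∞)) ^ (2 : ℕ) with hrdef
  have hscale : ∀ᵐ x : ℝ ∂volume, f (x - a₀) = r * f x := by
    filter_upwards [hrel] with x hx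
    simp only [hfdef, hx, nnnorm_mul, ENNReal.coe_mul, mul_pow, hrdef]
  -- translation invariance of the integral
  have htrans : (∫⁻ x : ℝ, f (x - a₀)) = ∫⁻ x : ℝ, f x := by
    have := (measurePreserving_add_right (volume : Measure ℝ) (-a₀)).lintegral_comp_emb
      (measurableEmbedding_addRight (-a₀)) f
    simpa [sub_eq_add_neg] using this
  have hrL : r * (∫⁻ x : ℝ, f x) = ∫⁻ x : ℝ, f x := by
    conv_rhs => rw [← htrans, lintegral_congr_ae hscale]
    rw [lintegral_const_mul' r f (by simp [hrdef] : r ≠ ∞)]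
  have hr1 : r = 1 := by
    have h1 : r * (∫⁻ x : ℝ, f x) = 1 * (∫⁻ x : ℝ, f x) := by rw [hrL, one_mul]
    exact (ENNReal.mul_left_inj hL0 hfin.ne).mp h1
  have hfper : ∀ᵐ x : ℝ ∂volume, f (x - a₀) = f x := by
    filter_upwards [hscale] with x hx
    rw [hx, hr1, one_mul]
  -- get period T = |a₀| with f (x + T) = f x a.e.
  have hT : 0 < |a₀| := abs_pos.mpr ha₀
  have hfT : ∀ᵐ x : ℝ ∂volume, f (x + |a₀|) = f x := by
    rcases abs_cases a₀ with ⟨he, hpos⟩ | ⟨he, hneg⟩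
    · rw [he]
      have := ((measurePreserving_add_right (volume : Measure ℝ)
        a₀).quasiMeasurePreserving.tendsto_ae).eventually hfper
      filter_upwards [this] with x hx
      simpa using hx.symm
    · rw [he]
      filter_upwards [hfper] with x hx
      simpa [sub_eq_add_neg] using hx
  have := aux_periodic f |a₀| hT hfT hfin
  exact absurd this hL0

end Aux

/-- For real-valued `0 ≠ g ∈ L²(ℝ)` and `a₀ ≠ 0`: if the symmetric five-point system
`{g, M₁g, M_{−1}g, M_bT_ag, M_{−b}T_ag}` is linearly independent, then the four-point system
`{g, M₁g, T_{a₀}g, M_bT_ag}` is linearly independent. -/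
theorem hrt_restriction_principle
    (g : ℝ → ℂ) (hg : MemLp g 2 (volume : Measure ℝ)) (hg0 : ¬ g =ᵐ[volume] 0)
    (hreal : ∀ x : ℝ, (g x).im = 0)
    (a b a₀ : ℝ) (ha₀ : a₀ ≠ 0)
    (h5 : ∀ d₁ d₂ d₃ d₄ d₅ : ℂ,
      (fun x : ℝ => d₁ * g x + d₂ * Complex.exp (2 * π * Complex.I * x) * g x +
          d₃ * Complex.exp (-(2 * π * Complex.I * x)) * g x +
          d₄ * Complex.exp (2 * π * Complex.I * b * x) * g (x - a) +
          d₅ * Complex.exp (-(2 * π * Complex.I * b * x)) * g (x - a)) =ᵐ[volume] 0 →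
      d₁ = 0 ∧ d₂ = 0 ∧ d₃ = 0 ∧ d₄ = 0 ∧ d₅ = 0) :
    ∀ c₁ c₂ c₃ c₄ : ℂ,
      (fun x : ℝ => c₁ * g x + c₂ * Complex.exp (2 * π * Complex.I * x) * g x +
          c₃ * g (x - a₀) +
          c₄ * Complex.exp (2 * π * Complex.I * b * x) * g (x - a)) =ᵐ[volume] 0 →
      c₁ = 0 ∧ c₂ = 0 ∧ c₃ = 0 ∧ c₄ = 0 := by
  intro c₁ c₂ c₃ c₄ h
  by_cases hc₃ : c₃ = 0
  · subst hc₃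
    obtain ⟨h1, h2, -, h4, -⟩ := h5 c₁ c₂ 0 c₄ 0 (by
      filter_upwards [h] with x hx
      simp only [Pi.zero_apply] at hx ⊢
      linear_combination hx)
    exact ⟨h1, h2, rfl, h4⟩
  · exfalso
    have hgc : ∀ x, (starRingEnd ℂ) (g x) = g x := fun x =>
      Complex.conj_eq_iff_im.mpr (hreal x)
    have e1 : ∀ x : ℝ, (starRingEnd ℂ) (2 * π * Complex.I * x) = -(2 * π * Complex.I * x) := by
      intro x; rw [map_mul, map_mul, map_mul, Complex.conj_I, Complex.conj_ofReal,
        Complex.conj_ofReal, map_ofNat]; ring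
    have e2 : ∀ x : ℝ, (starRingEnd ℂ) (2 * π * Complex.I * b * x)
        = -(2 * π * Complex.I * b * x) := by
      intro x; rw [map_mul, map_mul, map_mul, map_mul, Complex.conj_I, Complex.conj_ofReal,
        Complex.conj_ofReal, Complex.conj_ofReal, map_ofNat]; ring
    obtain ⟨hd1, hd2, -, hd4, -⟩ := h5
      ((starRingEnd ℂ) c₃ * c₁ - c₃ * (starRingEnd ℂ) c₁)
      ((starRingEnd ℂ) c₃ * c₂) (-(c₃ * (starRingEnd ℂ) c₂))
      ((starRingEnd ℂ) c₃ * c₄) (-(c₃ * (starRingEnd ℂ) c₄)) (by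
        filter_upwards [h] with x hx
        simp only [Pi.zero_apply] at hx ⊢
        have hcx : (starRingEnd ℂ) (c₁ * g x + c₂ * Complex.exp (2 * π * Complex.I * x) * g x +
            c₃ * g (x - a₀) + c₄ * Complex.exp (2 * π * Complex.I * b * x) * g (x - a)) = 0 := by
          rw [hx, map_zero]
        rw [map_add, map_add, map_add, map_mul, map_mul, map_mul, map_mul, map_mul, map_mul,
          hgc, hgc, hgc, ← Complex.exp_conj, ← Complex.exp_conj, e1, e2] at hcx
        linear_combination (starRingEnd ℂ) c₃ * hx - c₃ * hcx)
    have hc₃' : (starRingEnd ℂ) c₃ ≠ 0 := by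
      simpa using hc₃
    have hc₂ : c₂ = 0 := by
      rcases mul_eq_zero.mp hd2 with h' | h'
      · exact absurd h' hc₃'
      · exact h'
    have hc₄ : c₄ = 0 := by
      rcases mul_eq_zero.mp hd4 with h' | h'
      · exact absurd h' hc₃'
      · exact h'
    have hrel : ∀ᵐ x : ℝ ∂volume, g (x - a₀) = (-(c₁ / c₃)) * g x := by
      filter_upwards [h] with x hx
      simp only [Pi.zero_apply, hc₂, hc₄, zero_mul, add_zero, zero_add, mul_zero] at hx
      field_simp
      linear_combination hx
    exact hg0 (aux_ae_zero g hg a₀ ha₀ _ hrel)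
end
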